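/- Fix m ∈ ℕ, m ≥ 1, and let f_m(x) = 2·T_m(x/2) be the generalised logistic map of degree m, with derivative f_m'. Then the average Lyapunov exponent of f_m with respect to its invariant density D(x) = 1/(π·√(4−x²)) equals log m; that is, ∫_{−2}^{2} log|f_m'(x)| · (1/(π·√(4−x²))) dx = log m. -/

import Mathlib

open MeasureTheory

/-- The generalised logistic map of degree `m`: `f_m(x) = 2·T_m(x/2)`, where `T_m`
is the `m`-th Chebyshev polynomial of the first kind. -/
noncomputable def genLogistic (m : ℕ) (x : ℝ) : ℝ :=
  2 * (Polynomial.Chebyshev.T ℝ (m : ℤ)).eval (x / 2)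

open Real Set intervalIntegral



lemma deriv_genLogistic (m : ℕ) (x : ℝ) :
    deriv (genLogistic m) x = (m : ℝ) * (Polynomial.Chebyshev.U ℝ ((m : ℤ) - 1)).eval (x / 2) := by
  have h1 : HasDerivAt (fun x : ℝ => x / 2) (1/2) x := by
    simpa using (hasDerivAt_id x).div_const 2
  have h2 := (Polynomial.hasDerivAt (Polynomial.Chebyshev.T ℝ (m : ℤ)) (x / 2)).comp x h1
  have h3 := h2.const_mul (2 : ℝ)
  have : deriv (genLogistic m) x =
      2 * ((Polynomial.derivative (Polynomial.Chebyshev.T ℝ (m:ℤ))).eval (x/2) * (1/2)) :=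
    h3.deriv
  rw [this, Polynomial.Chebyshev.T_derivative_eq_U]
  push_cast
  simp [Polynomial.eval_mul]
  ring

lemma intInt_log01 : IntervalIntegrable Real.log volume 0 1 := by
  have h : IntervalIntegrable (fun x : ℝ => -(- Real.log x)) volume 0 1 := by
    apply IntervalIntegrable.neg
    apply intervalIntegrable_deriv_of_nonneg (g := fun x : ℝ => x - x * Real.log x)
    · exact (continuous_id.sub Real.continuous_mul_log).continuousOn
    · intro x hx
      simp only [min_def, max_def] at hx
      norm_num at hx
      have : HasDerivAt (fun x : ℝ => x - x * Real.log x) (1 - (Real.log x + 1)) x :=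
        ((hasDerivAt_id x).sub (Real.hasDerivAt_mul_log (ne_of_gt hx.1)))
      convert this using 1
      ring
    · intro x hx
      simp only [min_def, max_def] at hx; norm_num at hx
      have : Real.log x ≤ 0 := Real.log_nonpos hx.1.le hx.2.le
      linarith
  simpa using h

lemma intInt_log (c : ℝ) (hc : 0 < c) : IntervalIntegrable Real.log volume 0 c := by
  rcases le_total c 1 with h | h
  · exact intInt_log01.mono_set (by rw [Set.uIcc_of_le hc.le, Set.uIcc_of_le zero_le_one]; exact Set.Icc_subset_Icc le_rfl h)
  · exact intInt_log01.trans (intervalIntegrable_log (by simp [Set.uIcc_of_le h]))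

-- sin lower bounds
lemma sin_ge_lin {x : ℝ} (h0 : 0 ≤ x) (h2 : x ≤ π/2) : 2/π * x ≤ Real.sin x := by
  have hconc := strictConcaveOn_sin_Icc.concaveOn
  have hπ := Real.pi_pos
  have hb0 : (0:ℝ) ≤ 2/π * x := by positivity
  have hb1 : 2/π * x ≤ 1 := by rw [div_mul_eq_mul_div, div_le_one hπ]; linarith
  have ha0 : (0:ℝ) ≤ 1 - 2/π * x := by linarith
  have key := hconc.2 (Set.mem_Icc.2 ⟨le_refl (0:ℝ), Real.pi_pos.le⟩)
    (show (π/2 : ℝ) ∈ Set.Icc 0 π from Set.mem_Icc.2 ⟨by positivity, by linarith⟩) ha0 hb0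
    (show (1 - 2/π * x) + 2/π * x = 1 by ring)
  simp only [smul_eq_mul, mul_zero, zero_add, Real.sin_zero, Real.sin_pi_div_two, mul_one] at key
  calc 2/π * x = (1 - 2/π*x) * 0 + (2/π*x) * 1 := by ring
  _ ≤ Real.sin (2/π * x * (π/2)) := by simpa [smul_eq_mul] using key
  _ = Real.sin x := by congr 1; field_simp

lemma sin_lb {x : ℝ} (hx : x ∈ Set.Ioo 0 π) : x * (π - x) / π^2 ≤ Real.sin x := by
  have hπ := Real.pi_pos
  rcases le_total x (π/2) with h | h
  · have h1 := sin_ge_lin hx.1.le h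
    have : x * (π - x) / π^2 ≤ 2/π * x := by
      rw [div_le_iff₀ (by positivity)]
      calc x * (π - x) ≤ x * (2*π) := by nlinarith [hx.1.le]
      _ = 2/π * x * π^2 := by field_simp
    linarith
  · have h2 : π - x ≤ π/2 := by linarith
    have h1 := sin_ge_lin (x := π - x) (by linarith [hx.2]) h2
    rw [Real.sin_pi_sub] at h1
    have : x * (π - x) / π^2 ≤ 2/π * (π - x) := by
      rw [div_le_iff₀ (by positivity)]
      calc x * (π - x) ≤ (2*π) * (π - x) := by nlinarith [hx.2]
      _ = 2/π * (π - x) * π^2 := by field_simp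
    linarith


noncomputable def L (θ : ℝ) : ℝ := Real.log (Real.sin θ)

lemma L_periodic : Function.Periodic L π := by
  intro θ; simp only [L, Real.sin_add_pi, Real.log_neg_eq_log]

lemma L_meas : Measurable L := Real.measurable_log.comp Real.measurable_sin

lemma integrableOn_L_Ioo : IntegrableOn L (Set.Ioo 0 π) := by
  have hπ := Real.pi_pos
  -- dominating function
  set G : ℝ → ℝ := fun θ => 2 * Real.log π - Real.log θ - Real.log (π - θ) with hG
  have hlog1 : IntegrableOn Real.log (Set.Ioo 0 π) := by
    have := intInt_log π hπ
    rwa [intervalIntegrable_iff_integrableOn_Ioo_of_le hπ.le] at this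
  have hlog2 : IntegrableOn (fun θ => Real.log (π - θ)) (Set.Ioo 0 π) := by
    have h := (intInt_log π hπ).comp_sub_left π
    simp only [sub_zero, sub_self] at h
    have := h.symm
    rwa [intervalIntegrable_iff_integrableOn_Ioo_of_le hπ.le] at this
  have hGint : IntegrableOn G (Set.Ioo 0 π) := by
    apply Integrable.sub _ hlog2
    exact (integrableOn_const measure_Ioo_lt_top.ne).sub hlog1
  apply hGint.integrable.mono' (L_meas.aestronglyMeasurable.restrict)
  rw [ae_restrict_iff' measurableSet_Ioo]
  filter_upwards with θ hθ
  have hs : 0 < Real.sin θ := Real.sin_pos_of_pos_of_lt_pi hθ.1 hθ.2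
  have hlb := sin_lb hθ
  have h1 : Real.sin θ ≤ 1 := Real.sin_le_one θ
  have hL : L θ ≤ 0 := Real.log_nonpos hs.le h1
  rw [Real.norm_eq_abs, abs_of_nonpos hL]
  have hθ1 : 0 < θ := hθ.1
  have hθ2 : 0 < π - θ := by simpa using sub_pos.2 hθ.2
  have harg : 0 < θ * (π - θ) / π^2 := by positivity
  have h2 : Real.log (θ * (π - θ) / π^2) ≤ L θ := Real.log_le_log harg hlb
  have h3 : Real.log (θ * (π - θ) / π^2)
      = Real.log θ + Real.log (π - θ) - 2 * Real.log π := by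
    rw [Real.log_div (by positivity) (by positivity), Real.log_mul hθ1.ne' hθ2.ne',
      Real.log_pow]
    push_cast; ring
  simp only [hG]; linarith


lemma intInt_L_0pi : IntervalIntegrable L volume 0 π := by
  rw [intervalIntegrable_iff_integrableOn_Ioo_of_le Real.pi_pos.le]
  exact integrableOn_L_Ioo


lemma intInt_L_npi (n : ℕ) : IntervalIntegrable L volume 0 (n * π) ∧
    (∫ θ in (0:ℝ)..(n*π), L θ) = n * ∫ θ in (0:ℝ)..π, L θ := by
  induction n with
  | zero => simp
  | succ n ih =>
    have hshift : IntervalIntegrable L volume (n*π) (n*π + π) := by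
      have h := intInt_L_0pi.comp_sub_right (n*π)
      have heq : (fun x => L (x - n*π)) = L := by
        funext x
        simpa using (L_periodic.nat_mul n).sub_eq x
      rw [heq] at h
      simpa [add_comm] using h
    have hseg : (∫ θ in (n*π:ℝ)..(n*π + π), L θ) = ∫ θ in (0:ℝ)..π, L θ := by
      simpa using (L_periodic.intervalIntegral_add_eq (n*π) 0)
    have hint : IntervalIntegrable L volume 0 ((n+1) * π) := by
      have := ih.1.trans hshift
      simpa [add_mul, one_mul, add_assoc] using this
    refine ⟨by push_cast; exact_mod_cast hint, ?_⟩
    have hsum := integral_add_adjacent_intervals ih.1 hshift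
    push_cast
    rw [show ((n:ℝ)+1) * π = n*π + π by ring, ← hsum, hseg, ih.2]
    ring




lemma himg : Set.Ioo (-2:ℝ) 2 = (fun θ => 2 * Real.cos θ) '' Set.Ioo 0 π := by
  ext x
  constructor
  · rintro ⟨h1, h2⟩
    have hx1 : (-1:ℝ) < x/2 := by linarith
    have hx2 : x/2 < 1 := by linarith
    refine ⟨Real.arccos (x/2), ⟨Real.arccos_pos.2 hx2, ?_⟩, ?_⟩
    · refine lt_of_le_of_ne (Real.arccos_le_pi _) fun h => ?_
      have hc := Real.cos_arccos hx1.le hx2.le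
      rw [h, Real.cos_pi] at hc; linarith
    · have hc := Real.cos_arccos hx1.le hx2.le
      simp only [hc]; ring
  · rintro ⟨θ, ⟨h1, h2⟩, rfl⟩
    have hπ := Real.pi_pos
    dsimp only
    constructor
    · have : Real.cos π < Real.cos θ :=
        Real.strictAntiOn_cos ⟨h1.le, h2.le⟩ ⟨hπ.le, le_rfl⟩ h2
      rw [Real.cos_pi] at this; linarith
    · have : Real.cos θ < Real.cos 0 :=
        Real.strictAntiOn_cos ⟨le_rfl, hπ.le⟩ ⟨h1.le, h2.le⟩ h1
      rw [Real.cos_zero] at this; linarith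

lemma ae_sin_ne (m : ℕ) (hm : 1 ≤ m) : ∀ᵐ θ : ℝ, Real.sin (m * θ) ≠ 0 := by
  have hm' : (m:ℝ) ≠ 0 := Nat.cast_ne_zero.2 (by omega)
  have hsub : {θ : ℝ | Real.sin (m * θ) = 0} ⊆ Set.range (fun k : ℤ => k * π / m) := by
    intro θ hθ
    obtain ⟨k, hk⟩ := Real.sin_eq_zero_iff.1 hθ
    exact ⟨k, by field_simp; linarith⟩
  have hc : Set.Countable {θ : ℝ | Real.sin (m * θ) = 0} :=
    (Set.countable_range _).mono hsub
  have h0 : volume {θ : ℝ | Real.sin (m * θ) = 0} = 0 := hc.measure_zero _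
  rw [MeasureTheory.ae_iff]
  simpa using h0

/-- The average Lyapunov exponent of the generalised logistic map
`f_m` with respect to its invariant density `D(x) = 1/(π·√(4−x²))` equals `log m`:
`∫_{−2}^{2} log|f_m'(x)|·(1/(π·√(4−x²))) dx = log m`. -/
theorem genLogistic_lyapunov_exponent (m : ℕ) (hm : 1 ≤ m) :
    (∫ x in Set.Ioo (-2 : ℝ) 2,
      Real.log |deriv (genLogistic m) x| * (1 / (Real.pi * Real.sqrt (4 - x ^ 2))))
      = Real.log m := by
  have hπ := Real.pi_pos
  have hm' : (m:ℝ) ≠ 0 := Nat.cast_ne_zero.2 (by omega)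
  have hder : ∀ θ ∈ Set.Ioo (0:ℝ) π,
      HasDerivWithinAt (fun θ => 2 * Real.cos θ) (2 * (-Real.sin θ)) (Set.Ioo 0 π) θ :=
    fun θ _ => ((Real.hasDerivAt_cos θ).const_mul 2).hasDerivWithinAt
  have hinj : Set.InjOn (fun θ => 2 * Real.cos θ) (Set.Ioo 0 π) := by
    intro a ha b hb h
    exact Real.injOn_cos ⟨ha.1.le, ha.2.le⟩ ⟨hb.1.le, hb.2.le⟩
      (mul_left_cancel₀ two_ne_zero h)
  rw [himg, integral_image_eq_integral_abs_deriv_smul measurableSet_Ioo hder hinj]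
  -- a.e. rewrite of integrand
  have key : ∫ θ in Set.Ioo (0:ℝ) π,
      |2 * (-Real.sin θ)| • (Real.log |deriv (genLogistic m) (2 * Real.cos θ)| *
        (1 / (π * Real.sqrt (4 - (2 * Real.cos θ) ^ 2))))
      = ∫ θ in Set.Ioo (0:ℝ) π, (1/π) * (Real.log m + L (m * θ) - L θ) := by
    apply setIntegral_congr_ae measurableSet_Ioo
    filter_upwards [ae_sin_ne m hm] with θ hne hθ
    have hs : 0 < Real.sin θ := Real.sin_pos_of_pos_of_lt_pi hθ.1 hθ.2
    have hsqrt : Real.sqrt (4 - (2 * Real.cos θ) ^ 2) = 2 * Real.sin θ := by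
      rw [show 4 - (2 * Real.cos θ) ^ 2 = (2 * Real.sin θ)^2 by
        nlinarith [Real.sin_sq_add_cos_sq θ]]
      exact Real.sqrt_sq (by positivity)
    have hU : (Polynomial.Chebyshev.U ℝ ((m:ℤ) - 1)).eval (Real.cos θ) * Real.sin θ
        = Real.sin (m * θ) := by
      have := Polynomial.Chebyshev.U_real_cos θ ((m:ℤ) - 1)
      push_cast at this ⊢
      simpa using this
    have hUval : (Polynomial.Chebyshev.U ℝ ((m:ℤ) - 1)).eval (Real.cos θ)
        = Real.sin (m * θ) / Real.sin θ := by
      rw [eq_div_iff hs.ne']; exact hU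
    have hd : deriv (genLogistic m) (2 * Real.cos θ)
        = (m : ℝ) * (Real.sin (m * θ) / Real.sin θ) := by
      rw [deriv_genLogistic, show (2 * Real.cos θ) / 2 = Real.cos θ by ring, hUval]
    have hlog : Real.log |deriv (genLogistic m) (2 * Real.cos θ)|
        = Real.log m + L (m * θ) - L θ := by
      rw [hd, Real.log_abs, Real.log_mul hm' (div_ne_zero hne hs.ne'),
        Real.log_div hne hs.ne']
      simp [L]
      ring
    rw [hlog, hsqrt]
    have : |2 * (-Real.sin θ)| = 2 * Real.sin θ := by
      rw [abs_of_nonpos (by nlinarith)]; ring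
    rw [this]
    simp only [smul_eq_mul]
    field_simp
  rw [key]
  -- split the integral
  have hL : IntegrableOn L (Set.Ioo 0 π) := integrableOn_L_Ioo
  have hLm : IntegrableOn (fun θ => L (m * θ)) (Set.Ioo 0 π) := by
    have h := (intInt_L_npi m).1.comp_mul_left (c := m)
    simp only [zero_div] at h
    rw [show (m:ℝ) * π / m = π by field_simp] at h
    rwa [intervalIntegrable_iff_integrableOn_Ioo_of_le Real.pi_pos.le] at h
  have hconst : IntegrableOn (fun _ : ℝ => Real.log m) (Set.Ioo 0 π) :=
    integrableOn_const measure_Ioo_lt_top.ne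
  calc ∫ θ in Set.Ioo (0:ℝ) π, 1/π * (Real.log m + L (m * θ) - L θ)
      = (1/π) * ∫ θ in Set.Ioo (0:ℝ) π, (Real.log m + L (m * θ) - L θ) := by
        rw [MeasureTheory.integral_const_mul]
    _ = (1/π) * ((∫ _θ in Set.Ioo (0:ℝ) π, (Real.log m : ℝ))
          + ((∫ θ in Set.Ioo (0:ℝ) π, L (m * θ)) - ∫ θ in Set.Ioo (0:ℝ) π, L θ)) := by
        have hadd : Integrable (fun θ => Real.log m + L (m * θ))
            (volume.restrict (Set.Ioo 0 π)) := hconst.add hLm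
        rw [integral_sub hadd hL, integral_add hconst hLm]
        ring
    _ = Real.log m := by
        have h1 : (∫ _θ in Set.Ioo (0:ℝ) π, (Real.log m : ℝ)) = π * Real.log m := by
          simp [Real.volume_Ioo, ENNReal.toReal_ofReal hπ.le, hπ.le]
        have e1 : (∫ θ in Set.Ioo (0:ℝ) π, L (m * θ)) = ∫ θ in (0:ℝ)..π, L (m * θ) := by
          rw [intervalIntegral.integral_of_le hπ.le, integral_Ioc_eq_integral_Ioo]
        have e2 : (∫ θ in Set.Ioo (0:ℝ) π, L θ) = ∫ θ in (0:ℝ)..π, L θ := by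
          rw [intervalIntegral.integral_of_le hπ.le, integral_Ioc_eq_integral_Ioo]
        have e3 : (∫ θ in (0:ℝ)..π, L (m * θ)) = ∫ θ in (0:ℝ)..π, L θ := by
          rw [intervalIntegral.integral_comp_mul_left L hm', mul_zero, (intInt_L_npi m).2,
            smul_eq_mul]
          field_simp
        rw [h1, e1, e2, e3, sub_self, add_zero]
        field_simp
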